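/- Let P⁽¹⁾, …, P⁽ᵗ⁾ be transition matrices of lazy random walks on graphs G⁽¹⁾, …, G⁽ᵗ⁾ on the same vertex set V, each with m edges and each having the same stationary distribution π. Suppose u ∈ V, and for each i the neighbors of u in G⁽ⁱ⁾ satisfy π(v) = α_u d_v/(2m) for a constant α_u with π(u) = α_u d_u/(2m). Let p⁽⁰⁾ be a probability distribution, ρ⁽ⁱ⁾ = (p⁽⁰⁾P⁽¹⁾⋯P⁽ⁱ⁾)/π, and suppose |ρ⁽ᵗ⁾(u) − ρ⁽⁰⁾(u)| ≥ ε > 0. Then Var_π(ρ⁽⁰⁾) − Var_π(ρ⁽ᵗ⁾) ≥ (α_u/(4m)) Σ_{i=1}^{t} Σ_{v ∼_i u} (ρ^{(i−1)}(u) − ρ^{(i−1)}(v))² ≥ 2ε²π(u)/t. -/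

import Mathlib

open Finset

/-- Transition matrix of the lazy random walk on a graph. -/
noncomputable def lazyWalk {V : Type*} [Fintype V] [DecidableEq V]
    (G : SimpleGraph V) [DecidableRel G.Adj] : V → V → ℝ :=
  fun u v => if u = v then 1/2 else if G.Adj u v then 1/(2 * G.degree u) else 0

section Helpers
variable {V : Type*} [Fintype V] [DecidableEq V]

lemma lazyWalk_nonneg (G : SimpleGraph V) [DecidableRel G.Adj] (u v : V) :
    0 ≤ lazyWalk G u v := by
  unfold lazyWalk
  split_ifs <;> positivity

lemma lazyWalk_self (G : SimpleGraph V) [DecidableRel G.Adj] (u : V) :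
    lazyWalk G u u = 1/2 := by simp [lazyWalk]

lemma lazyWalk_adj (G : SimpleGraph V) [DecidableRel G.Adj] {u v : V} (h : G.Adj u v) :
    lazyWalk G u v = 1/(2 * (G.degree u : ℝ)) := by
  have : u ≠ v := G.ne_of_adj h
  simp [lazyWalk, this, h]

lemma lazyWalk_of_not (G : SimpleGraph V) [DecidableRel G.Adj] {u v : V}
    (h1 : u ≠ v) (h2 : ¬ G.Adj u v) : lazyWalk G u v = 0 := by
  simp [lazyWalk, h1, h2]

lemma sum_lazyWalk (G : SimpleGraph V) [DecidableRel G.Adj] (v : V) :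
    ∑ w, lazyWalk G v w = 1/2 + (G.degree v : ℝ) * (1/(2 * (G.degree v : ℝ))) := by
  have h : ∀ w, lazyWalk G v w
      = (if v = w then (1:ℝ)/2 else 0)
        + (if G.Adj v w then 1/(2 * (G.degree v : ℝ)) else 0) := by
    intro w
    by_cases hw : v = w
    · simp [lazyWalk, hw, SimpleGraph.irrefl]
    · simp [lazyWalk, hw]
  rw [Finset.sum_congr rfl fun w _ => h w, Finset.sum_add_distrib]
  congr 1
  · simp
  · rw [Finset.sum_ite, Finset.sum_const_zero, Finset.sum_const, add_zero, nsmul_eq_mul]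
    congr 2
    rw [← SimpleGraph.card_neighborFinset_eq_degree, SimpleGraph.neighborFinset_eq_filter]

lemma sum_lazyWalk_of_pos (G : SimpleGraph V) [DecidableRel G.Adj] (v : V)
    (h : 0 < G.degree v) : ∑ w, lazyWalk G v w = 1 := by
  rw [sum_lazyWalk]
  have h1 : (G.degree v : ℝ) ≠ 0 := by positivity
  field_simp
  ring

lemma sum_lazyWalk_le_one (G : SimpleGraph V) [DecidableRel G.Adj] (v : V) :
    ∑ w, lazyWalk G v w ≤ 1 := by
  rcases Nat.eq_zero_or_pos (G.degree v) with h | h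
  · rw [sum_lazyWalk, h]; norm_num
  · exact (sum_lazyWalk_of_pos G v h).le

lemma var_identity (q f : V → ℝ) (hq1 : ∑ v, q v = 1) :
    (∑ v, q v * f v ^ 2) - (∑ v, q v * f v) ^ 2
      = (1/2) * ∑ x, ∑ y, q x * q y * (f x - f y) ^ 2 := by
  have expand : ∀ x : V, ∑ y, q x * q y * (f x - f y)^2
      = q x * f x^2 + (∑ y, q y * f y^2) * q x - (∑ y, q y * f y) * (2 * (q x * f x)) := by
    intro x
    have e1 : ∀ y : V, q x * q y * (f x - f y)^2
        = q y * (q x * f x^2) + (q y * f y^2) * q x - (q y * f y) * (2 * (q x * f x)) :=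
      fun y => by ring
    rw [Finset.sum_congr rfl fun y _ => e1 y, Finset.sum_sub_distrib, Finset.sum_add_distrib,
      ← Finset.sum_mul, ← Finset.sum_mul, ← Finset.sum_mul, hq1]
    ring
  rw [Finset.sum_congr rfl fun x _ => expand x, Finset.sum_sub_distrib, Finset.sum_add_distrib,
    ← Finset.mul_sum, hq1]
  have h2 : ∑ x : V, (∑ y : V, q y * f y) * (2 * (q x * f x))
      = (∑ y, q y * f y) * (2 * ∑ x, q x * f x) := by
    rw [Finset.mul_sum, Finset.mul_sum]
  rw [h2]
  ring

lemma var_lower (q f : V → ℝ) (hq0 : ∀ v, 0 ≤ q v) (hq1 : ∑ v, q v = 1)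
    (u : V) (S : Finset V) (hu : u ∉ S) :
    ∑ v ∈ S, q u * q v * (f u - f v) ^ 2
      ≤ (∑ v, q v * f v ^ 2) - (∑ v, q v * f v) ^ 2 := by
  rw [var_identity q f hq1]
  set T : V → V → ℝ := fun x y => q x * q y * (f x - f y)^2 with hT
  have ht : ∀ x y, 0 ≤ T x y := fun x y =>
    mul_nonneg (mul_nonneg (hq0 x) (hq0 y)) (sq_nonneg _)
  have h1 : ∑ x ∈ insert u S, (∑ y, T x y) ≤ ∑ x, ∑ y, T x y :=
    Finset.sum_le_sum_of_subset_of_nonneg (Finset.subset_univ _)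
      (fun x _ _ => Finset.sum_nonneg fun y _ => ht x y)
  rw [Finset.sum_insert hu] at h1
  have h2 : ∑ y ∈ S, T u y ≤ ∑ y, T u y :=
    Finset.sum_le_sum_of_subset_of_nonneg (Finset.subset_univ _) (fun y _ _ => ht u y)
  have h3 : ∑ x ∈ S, T x u ≤ ∑ x ∈ S, ∑ y, T x y :=
    Finset.sum_le_sum fun x _ => Finset.single_le_sum (fun y _ => ht x y) (Finset.mem_univ u)
  have hsym : ∑ v ∈ S, T v u = ∑ v ∈ S, T u v :=
    Finset.sum_congr rfl fun v _ => by simp only [hT]; ring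
  linarith

lemma var_nonneg (q f : V → ℝ) (hq0 : ∀ v, 0 ≤ q v) (hq1 : ∑ v, q v = 1) (u : V) :
    0 ≤ (∑ v, q v * f v ^ 2) - (∑ v, q v * f v) ^ 2 := by
  have := var_lower q f hq0 hq1 u ∅ (Finset.notMem_empty u)
  simpa using this

end Helpers
theorem stmt_9 {V : Type*} [Fintype V] [DecidableEq V]
    (G : ℕ → SimpleGraph V) [∀ i, DecidableRel (G i).Adj]
    (t : ℕ) (ht : 1 ≤ t) (m : ℕ) (hm0 : 0 < m)
    (hedges : ∀ i ∈ Finset.Icc 1 t, (G i).edgeFinset.card = m)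
    (π : V → ℝ) (hπpos : ∀ w, 0 < π w) (hπsum : ∑ w, π w = 1)
    (hstat : ∀ i ∈ Finset.Icc 1 t, ∀ w, ∑ v, π v * lazyWalk (G i) v w = π w)
    (d : V → ℕ) (hdeg : ∀ i ∈ Finset.Icc 1 t, ∀ v, (G i).degree v = d v)
    (u : V) (α : ℝ) (hα : 0 ≤ α)
    (hπu : π u = α * d u / (2 * m))
    (hπnbr : ∀ i ∈ Finset.Icc 1 t, ∀ v ∈ (G i).neighborFinset u,
      π v = α * d v / (2 * m))
    (p : ℕ → V → ℝ) (hp0nonneg : ∀ w, 0 ≤ p 0 w) (hp0sum : ∑ w, p 0 w = 1)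
    (hp : ∀ i, ∀ w, p (i + 1) w = ∑ v, p i v * lazyWalk (G (i + 1)) v w)
    (ρ : ℕ → V → ℝ) (hρ : ∀ i w, ρ i w = p i w / π w)
    (ε : ℝ) (hε : 0 < ε) (hgap : ε ≤ |ρ t u - ρ 0 u|) :
    (α / (4 * m)) * ∑ i ∈ Finset.Icc 1 t, ∑ v ∈ (G i).neighborFinset u,
        (ρ (i - 1) u - ρ (i - 1) v) ^ 2
      ≤ (∑ w, (ρ 0 w - ∑ z, ρ 0 z * π z) ^ 2 * π w)
        - (∑ w, (ρ t w - ∑ z, ρ t z * π z) ^ 2 * π w)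
    ∧ 2 * ε ^ 2 * π u / t
      ≤ (α / (4 * m)) * ∑ i ∈ Finset.Icc 1 t, ∑ v ∈ (G i).neighborFinset u,
          (ρ (i - 1) u - ρ (i - 1) v) ^ 2 := by
  have hm : (0:ℝ) < m := by exact_mod_cast hm0
  have h1t : 1 ∈ Finset.Icc 1 t := by simp [ht]
  -- all row sums are 1
  have hrow1 : ∀ i ∈ Finset.Icc 1 t, ∀ v, ∑ w, lazyWalk (G i) v w = 1 := by
    intro i hi v
    have e2 : ∑ x, π x * ∑ w, lazyWalk (G i) x w = 1 := by
      simp_rw [Finset.mul_sum]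
      rw [Finset.sum_comm]
      calc ∑ w, ∑ x, π x * lazyWalk (G i) x w = ∑ w, π w :=
            Finset.sum_congr rfl fun w _ => hstat i hi w
        _ = 1 := hπsum
    have e : ∑ x, (π x - π x * (∑ w, lazyWalk (G i) x w)) = 0 := by
      rw [Finset.sum_sub_distrib, hπsum, e2, sub_self]
    have nn : ∀ x ∈ Finset.univ, (0:ℝ) ≤ π x - π x * ∑ w, lazyWalk (G i) x w := by
      intro x _
      have h1 := sum_lazyWalk_le_one (G i) x
      nlinarith [hπpos x]
    have z := (Finset.sum_eq_zero_iff_of_nonneg nn).mp e v (Finset.mem_univ v)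
    have hz : π v * ∑ w, lazyWalk (G i) v w = π v * 1 := by rw [mul_one]; linarith
    exact mul_left_cancel₀ (hπpos v).ne' hz
  -- all degrees positive
  have hdpos : ∀ i ∈ Finset.Icc 1 t, ∀ v, 0 < (G i).degree v := by
    intro i hi v
    rcases Nat.eq_zero_or_pos ((G i).degree v) with h | h
    · exfalso
      have := hrow1 i hi v
      rw [sum_lazyWalk, h] at this
      norm_num at this
    · exact h
  have hdvpos : ∀ v, 0 < d v := fun v => hdeg 1 h1t v ▸ hdpos 1 h1t v
  have hduR : (0:ℝ) < d u := by exact_mod_cast hdvpos u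
  have hαpos : 0 < α := by
    rcases hα.lt_or_eq with h | h
    · exact h
    · exfalso
      have hu := hπpos u
      rw [hπu, ← h] at hu
      simp at hu
  -- mass preservation
  have hmass : ∀ i, i ≤ t → ∑ w, p i w = 1 := by
    intro i
    induction i with
    | zero => intro _; exact hp0sum
    | succ n ihn =>
      intro hle
      have hn : n ≤ t := Nat.le_of_succ_le hle
      have hmem : n + 1 ∈ Finset.Icc 1 t :=
        Finset.mem_Icc.mpr ⟨Nat.succ_le_succ (Nat.zero_le n), hle⟩
      calc ∑ w, p (n+1) w = ∑ w, ∑ v, p n v * lazyWalk (G (n+1)) v w := by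
            exact Finset.sum_congr rfl fun w _ => hp n w
        _ = ∑ v, ∑ w, p n v * lazyWalk (G (n+1)) v w := Finset.sum_comm
        _ = ∑ v, p n v := by
            refine Finset.sum_congr rfl fun v _ => ?_
            rw [← Finset.mul_sum, hrow1 _ hmem v, mul_one]
        _ = 1 := ihn hn
  -- mean of ρ is 1
  have hmean : ∀ i, i ≤ t → ∑ z, ρ i z * π z = 1 := by
    intro i hi
    calc ∑ z, ρ i z * π z = ∑ z, p i z := by
          refine Finset.sum_congr rfl fun z _ => ?_
          rw [hρ, div_mul_cancel₀ _ (hπpos z).ne']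
      _ = 1 := hmass i hi
  -- variance formula
  have hVar : ∀ i, i ≤ t → ∑ w, (ρ i w - ∑ z, ρ i z * π z)^2 * π w
      = (∑ w, (ρ i w)^2 * π w) - 1 := by
    intro i hi
    rw [hmean i hi]
    have e : ∀ w, (ρ i w - 1)^2 * π w = (ρ i w)^2 * π w + π w - (ρ i w * π w) * 2 :=
      fun w => by ring
    rw [Finset.sum_congr rfl fun w _ => e w, Finset.sum_sub_distrib, Finset.sum_add_distrib,
      ← Finset.sum_mul, hπsum, hmean i hi]
    ring
  -- π of neighbors over twice-degree is α/(4m)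
  have hnbrval : ∀ i ∈ Finset.Icc 1 t, ∀ v ∈ (G i).neighborFinset u,
      π v * lazyWalk (G i) v u = α / (4 * m) := by
    intro i hi v hv
    have hadj : (G i).Adj u v := (SimpleGraph.mem_neighborFinset _ _ _).mp hv
    have hP : lazyWalk (G i) v u = 1/(2 * ((G i).degree v : ℝ)) := lazyWalk_adj _ hadj.symm
    have hdv : ((G i).degree v : ℕ) = d v := hdeg i hi v
    have hdvR : (0:ℝ) < d v := by exact_mod_cast hdvpos v
    rw [hP, hπnbr i hi v hv, hdv]
    field_simp
    ring
  have hPuv : ∀ i ∈ Finset.Icc 1 t, ∀ v ∈ (G i).neighborFinset u,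
      π u * lazyWalk (G i) u v = α / (4 * m) := by
    intro i hi v hv
    have hadj : (G i).Adj u v := (SimpleGraph.mem_neighborFinset _ _ _).mp hv
    have hP : lazyWalk (G i) u v = 1/(2 * ((G i).degree u : ℝ)) := lazyWalk_adj _ hadj
    rw [hP, hπu, hdeg i hi u]
    field_simp
    ring
  -- the key per-step estimate
  have key : ∀ i ∈ Finset.Icc 1 t,
      (α/(4*m)) * ∑ v ∈ (G i).neighborFinset u, (ρ (i-1) u - ρ (i-1) v)^2
        ≤ (∑ w, (ρ (i-1) w)^2 * π w) - (∑ w, (ρ i w)^2 * π w) := by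
    intro i hi
    obtain ⟨hi1, hit⟩ := Finset.mem_Icc.mp hi
    have hipred : i - 1 + 1 = i := Nat.succ_pred_eq_of_pos hi1
    set f := ρ (i-1) with hf
    set N := (G i).neighborFinset u with hN
    set q : V → V → ℝ := fun w v => π v * lazyWalk (G i) v w / π w with hq
    have hq0 : ∀ w v, 0 ≤ q w v := fun w v =>
      div_nonneg (mul_nonneg (hπpos v).le (lazyWalk_nonneg _ _ _)) (hπpos w).le
    have hq1 : ∀ w, ∑ v, q w v = 1 := by
      intro w
      rw [← Finset.sum_div, hstat i hi w, div_self (hπpos w).ne']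
    have hgq : ∀ w, ρ i w = ∑ v, q w v * f v := by
      intro w
      conv_lhs => rw [hρ, ← hipred, hp (i-1) w]
      rw [Finset.sum_div]
      refine Finset.sum_congr rfl fun v _ => ?_
      rw [hf, hρ]
      simp only [hq]
      field_simp [(hπpos v).ne', (hπpos w).ne']
      ring
      rw [Nat.add_comm 1 (i - 1), hipred]
    have hEf : ∑ w, π w * (∑ v, q w v * (f v)^2) = ∑ w, (f w)^2 * π w := by
      have e : ∀ w, π w * (∑ v, q w v * (f v)^2)
          = ∑ v, (π v * (f v)^2) * lazyWalk (G i) v w := by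
        intro w
        rw [Finset.mul_sum]
        refine Finset.sum_congr rfl fun v _ => ?_
        simp only [hq]
        field_simp [(hπpos w).ne']
      rw [Finset.sum_congr rfl fun w _ => e w, Finset.sum_comm]
      refine Finset.sum_congr rfl fun v _ => ?_
      rw [← Finset.mul_sum, hrow1 i hi v, mul_one]
      ring
    have hdiff : (∑ w, (f w)^2 * π w) - (∑ w, (ρ i w)^2 * π w)
        = ∑ w, π w * ((∑ v, q w v * (f v)^2) - (∑ v, q w v * f v)^2) := by
      have e : ∑ w, (ρ i w)^2 * π w = ∑ w, π w * (∑ v, q w v * f v)^2 :=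
        Finset.sum_congr rfl fun w _ => by rw [hgq w]; ring
      rw [e, ← hEf, ← Finset.sum_sub_distrib]
      exact Finset.sum_congr rfl fun w _ => by ring
    set D : V → ℝ := fun w => (∑ v, q w v * (f v)^2) - (∑ v, q w v * f v)^2 with hD
    have hDnn : ∀ w, 0 ≤ D w := fun w => var_nonneg (q w) f (hq0 w) (hq1 w) u
    have huN : u ∉ N := by
      rw [hN, SimpleGraph.mem_neighborFinset]
      exact (G i).irrefl
    have hsubset : (π u * D u + ∑ w ∈ N, π w * D w) ≤ ∑ w, π w * D w := by
      have h1 : ∑ w ∈ insert u N, π w * D w ≤ ∑ w, π w * D w :=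
        Finset.sum_le_sum_of_subset_of_nonneg (Finset.subset_univ _)
          (fun w _ _ => mul_nonneg (hπpos w).le (hDnn w))
      rwa [Finset.sum_insert huN] at h1
    -- bound at u
    have hbu : (α/(8*m)) * ∑ v ∈ N, (f u - f v)^2 ≤ π u * D u := by
      have h1 : ∑ v ∈ N, q u u * q u v * (f u - f v)^2 ≤ D u :=
        var_lower (q u) f (hq0 u) (hq1 u) u N huN
      have h2 : ∀ v ∈ N, π u * (q u u * q u v * (f u - f v)^2)
          = (α/(8*m)) * (f u - f v)^2 := by
        intro v hv
        have e1 : q u u = 1/2 := by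
          simp only [hq]
          rw [lazyWalk_self]
          field_simp [(hπpos u).ne']
        have e2 : π u * q u v = α/(4*m) := by
          simp only [hq]
          rw [mul_comm, div_mul_cancel₀ _ (hπpos u).ne']
          exact hnbrval i hi v hv
        calc π u * (q u u * q u v * (f u - f v)^2)
            = (π u * q u v) * q u u * (f u - f v)^2 := by ring
          _ = (α/(8*m)) * (f u - f v)^2 := by rw [e1, e2]; ring
      calc (α/(8*m)) * ∑ v ∈ N, (f u - f v)^2
          = ∑ v ∈ N, π u * (q u u * q u v * (f u - f v)^2) := by
            rw [Finset.mul_sum]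
            exact Finset.sum_congr rfl fun v hv => (h2 v hv).symm
        _ = π u * ∑ v ∈ N, q u u * q u v * (f u - f v)^2 := by rw [Finset.mul_sum]
        _ ≤ π u * D u := by
            exact mul_le_mul_of_nonneg_left h1 (hπpos u).le
    -- bound at each neighbor
    have hbv : ∑ v ∈ N, (α/(8*m)) * (f u - f v)^2 ≤ ∑ v ∈ N, π v * D v := by
      refine Finset.sum_le_sum fun v hv => ?_
      have hvu : v ≠ u := by
        intro h
        rw [h] at hv
        exact huN hv
      have hnotmem : v ∉ ({u} : Finset V) := by simp [hvu]
      have h1 : ∑ w ∈ ({u} : Finset V), q v v * q v w * (f v - f w)^2 ≤ D v :=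
        var_lower (q v) f (hq0 v) (hq1 v) v {u} hnotmem
      rw [Finset.sum_singleton] at h1
      have e1 : q v v = 1/2 := by
        simp only [hq]
        rw [lazyWalk_self]
        field_simp [(hπpos v).ne']
      have e2 : π v * q v u = α/(4*m) := by
        simp only [hq]
        rw [mul_comm, div_mul_cancel₀ _ (hπpos v).ne']
        exact hPuv i hi v hv
      have : π v * (q v v * q v u * (f v - f u)^2) = (α/(8*m)) * (f u - f v)^2 := by
        have : (f v - f u)^2 = (f u - f v)^2 := by ring
        rw [this]
        calc π v * (q v v * q v u * (f u - f v)^2)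
            = (π v * q v u) * q v v * (f u - f v)^2 := by ring
          _ = (α/(8*m)) * (f u - f v)^2 := by rw [e1, e2]; ring
      calc (α/(8*m)) * (f u - f v)^2 = π v * (q v v * q v u * (f v - f u)^2) := this.symm
        _ ≤ π v * D v := mul_le_mul_of_nonneg_left h1 (hπpos v).le
    rw [hdiff]
    have expand : (α/(4*m)) * ∑ v ∈ N, (f u - f v)^2
        = (α/(8*m)) * (∑ v ∈ N, (f u - f v)^2)
          + ∑ v ∈ N, (α/(8*m)) * (f u - f v)^2 := by
      rw [← Finset.mul_sum]
      ring
    rw [expand]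
    calc (α/(8*m)) * (∑ v ∈ N, (f u - f v)^2) + ∑ v ∈ N, (α/(8*m)) * (f u - f v)^2
        ≤ π u * D u + ∑ w ∈ N, π w * D w := add_le_add hbu hbv
      _ ≤ ∑ w, π w * D w := hsubset
  -- reindexing sums over Icc 1 t
  have reindex : ∀ (F : ℕ → ℝ), ∑ i ∈ Finset.Icc 1 t, F i = ∑ j ∈ Finset.range t, F (j+1) := by
    intro F
    rw [← Finset.Ico_add_one_right_eq_Icc, Finset.sum_Ico_eq_sum_range]
    exact Finset.sum_congr rfl fun j _ => by rw [Nat.add_comm]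
  -- part 1
  have tel : ∑ i ∈ Finset.Icc 1 t, ((∑ w, (ρ (i-1) w)^2 * π w) - (∑ w, (ρ i w)^2 * π w))
      = (∑ w, (ρ 0 w)^2 * π w) - (∑ w, (ρ t w)^2 * π w) := by
    rw [reindex fun i => (∑ w, (ρ (i-1) w)^2 * π w) - (∑ w, (ρ i w)^2 * π w)]
    have e : ∀ j ∈ Finset.range t, (∑ w, (ρ ((j+1)-1) w)^2 * π w) - (∑ w, (ρ (j+1) w)^2 * π w)
        = (fun k => ∑ w, (ρ k w)^2 * π w) j - (fun k => ∑ w, (ρ k w)^2 * π w) (j+1) := by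
      intro j _
      simp
    rw [Finset.sum_congr rfl e, Finset.sum_range_sub' (fun k => ∑ w, (ρ k w)^2 * π w) t]
  have part1 : (α / (4 * m)) * ∑ i ∈ Finset.Icc 1 t, ∑ v ∈ (G i).neighborFinset u,
        (ρ (i - 1) u - ρ (i - 1) v) ^ 2
      ≤ (∑ w, (ρ 0 w)^2 * π w) - (∑ w, (ρ t w)^2 * π w) := by
    rw [Finset.mul_sum, ← tel]
    exact Finset.sum_le_sum key
  -- drift bound per step
  have hdrift : ∀ i ∈ Finset.Icc 1 t,
      (ρ i u - ρ (i-1) u)^2 * (4 * (d u : ℝ))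
        ≤ ∑ v ∈ (G i).neighborFinset u, (ρ (i-1) u - ρ (i-1) v)^2 := by
    intro i hi
    obtain ⟨hi1, hit⟩ := Finset.mem_Icc.mp hi
    have hipred : i - 1 + 1 = i := Nat.succ_pred_eq_of_pos hi1
    set f := ρ (i-1) with hf
    set N := (G i).neighborFinset u with hN
    have huN : u ∉ N := by
      rw [hN, SimpleGraph.mem_neighborFinset]
      exact (G i).irrefl
    have hcard : (N.card : ℝ) = (d u : ℝ) := by
      rw [hN, SimpleGraph.card_neighborFinset_eq_degree, hdeg i hi u]
    have hpi : π u * ρ i u = p i u := by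
      rw [hρ, mul_div_cancel₀ _ (hπpos u).ne']
    have h0 : p i u = ∑ v, π v * lazyWalk (G i) v u * f v := by
      conv_lhs => rw [← hipred, hp (i-1) u]
      refine Finset.sum_congr rfl fun v _ => ?_
      rw [hf, hρ]
      field_simp [(hπpos v).ne']
      ring
      rw [Nat.add_comm 1 (i - 1), hipred]
    have hrestrict : ∑ v, π v * lazyWalk (G i) v u * f v
        = ∑ v ∈ insert u N, π v * lazyWalk (G i) v u * f v := by
      symm
      apply Finset.sum_subset (Finset.subset_univ _)
      intro x _ hx
      rw [Finset.mem_insert, hN, SimpleGraph.mem_neighborFinset] at hx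
      push_neg at hx
      have hnadj : ¬ (G i).Adj x u := fun h => hx.2 h.symm
      rw [lazyWalk_of_not _ hx.1 hnadj]
      ring
    have hsum : π u * ρ i u = π u * (1/2) * f u + (α/(4*m)) * ∑ v ∈ N, f v := by
      rw [hpi, h0, hrestrict, Finset.sum_insert huN, lazyWalk_self, Finset.mul_sum]
      congr 1
      exact Finset.sum_congr rfl fun v hv => by rw [hnbrval i hi v hv]
    have hα4 : α/(4*(m:ℝ)) = π u / (2 * (d u : ℝ)) := by
      rw [hπu]
      field_simp
      ring
    have hsum' : ρ i u = f u / 2 + (∑ v ∈ N, f v) / (2 * (d u : ℝ)) := by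
      apply mul_left_cancel₀ (hπpos u).ne'
      rw [hsum, hα4]
      field_simp
    have hexp : ∑ v ∈ N, (f v - f u) = (∑ v ∈ N, f v) - (d u : ℝ) * f u := by
      rw [Finset.sum_sub_distrib, Finset.sum_const, nsmul_eq_mul, hcard]
    have hdelta : ρ i u - f u = (∑ v ∈ N, (f v - f u)) / (2 * (d u : ℝ)) := by
      rw [hsum', hexp]
      field_simp
      ring
    have hcs : (∑ v ∈ N, (f v - f u))^2 ≤ (d u : ℝ) * ∑ v ∈ N, (f v - f u)^2 := by
      have h := sq_sum_le_card_mul_sum_sq (s := N) (f := fun v => f v - f u)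
      rwa [hcard] at h
    have heq : (ρ i u - f u)^2 * (4 * (d u : ℝ))
        = (∑ v ∈ N, (f v - f u))^2 / (d u : ℝ) := by
      rw [hdelta]
      field_simp
      ring
    have hswap : ∑ v ∈ N, (f u - f v)^2 = ∑ v ∈ N, (f v - f u)^2 :=
      Finset.sum_congr rfl fun v _ => by ring
    rw [heq, hswap, div_le_iff₀ hduR]
    calc (∑ v ∈ N, (f v - f u))^2 ≤ (d u : ℝ) * ∑ v ∈ N, (f v - f u)^2 := hcs
      _ = (∑ v ∈ N, (f v - f u)^2) * (d u : ℝ) := by ring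
  -- second inequality
  have htR : (0:ℝ) < t := by exact_mod_cast ht
  have htel2 : ∑ i ∈ Finset.Icc 1 t, (ρ i u - ρ (i-1) u) = ρ t u - ρ 0 u := by
    rw [reindex fun i => ρ i u - ρ (i-1) u]
    have e : ∀ j ∈ Finset.range t, ρ (j+1) u - ρ ((j+1)-1) u
        = (fun k => ρ k u) (j+1) - (fun k => ρ k u) j := by
      intro j _
      simp
    rw [Finset.sum_congr rfl e, Finset.sum_range_sub (fun k => ρ k u) t]
  have habs : ε ≤ ∑ i ∈ Finset.Icc 1 t, |ρ i u - ρ (i-1) u| := by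
    calc ε ≤ |ρ t u - ρ 0 u| := hgap
      _ = |∑ i ∈ Finset.Icc 1 t, (ρ i u - ρ (i-1) u)| := by rw [htel2]
      _ ≤ ∑ i ∈ Finset.Icc 1 t, |ρ i u - ρ (i-1) u| := Finset.abs_sum_le_sum_abs _ _
  have hcardIcc : ((Finset.Icc 1 t).card : ℝ) = (t : ℝ) := by
    rw [Nat.card_Icc]
    simp
  have hsq : ε^2 ≤ (t:ℝ) * ∑ i ∈ Finset.Icc 1 t, (ρ i u - ρ (i-1) u)^2 := by
    have h1 : (∑ i ∈ Finset.Icc 1 t, |ρ i u - ρ (i-1) u|)^2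
        ≤ ((Finset.Icc 1 t).card : ℝ) * ∑ i ∈ Finset.Icc 1 t, |ρ i u - ρ (i-1) u|^2 :=
      sq_sum_le_card_mul_sum_sq
    have h2 : ∑ i ∈ Finset.Icc 1 t, |ρ i u - ρ (i-1) u|^2
        = ∑ i ∈ Finset.Icc 1 t, (ρ i u - ρ (i-1) u)^2 :=
      Finset.sum_congr rfl fun i _ => sq_abs _
    have h3 : ε^2 ≤ (∑ i ∈ Finset.Icc 1 t, |ρ i u - ρ (i-1) u|)^2 :=
      pow_le_pow_left₀ hε.le habs 2
    rw [h2, hcardIcc] at h1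
    linarith
  have hsumdrift : (∑ i ∈ Finset.Icc 1 t, (ρ i u - ρ (i-1) u)^2) * (4 * (d u : ℝ))
      ≤ ∑ i ∈ Finset.Icc 1 t, ∑ v ∈ (G i).neighborFinset u, (ρ (i-1) u - ρ (i-1) v)^2 := by
    rw [Finset.sum_mul]
    exact Finset.sum_le_sum hdrift
  have part2 : 2 * ε ^ 2 * π u / t
      ≤ (α / (4 * m)) * ∑ i ∈ Finset.Icc 1 t, ∑ v ∈ (G i).neighborFinset u,
          (ρ (i - 1) u - ρ (i - 1) v) ^ 2 := by
    have hS : (ε^2 / t) * (4 * (d u : ℝ))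
        ≤ ∑ i ∈ Finset.Icc 1 t, ∑ v ∈ (G i).neighborFinset u, (ρ (i-1) u - ρ (i-1) v)^2 := by
      have hd1 : ε^2 / t ≤ ∑ i ∈ Finset.Icc 1 t, (ρ i u - ρ (i-1) u)^2 := by
        rw [div_le_iff₀ htR]
        linarith
      calc (ε^2 / t) * (4 * (d u : ℝ))
          ≤ (∑ i ∈ Finset.Icc 1 t, (ρ i u - ρ (i-1) u)^2) * (4 * (d u : ℝ)) := by
            apply mul_le_mul_of_nonneg_right hd1
            positivity
        _ ≤ _ := hsumdrift
    have hkey2 : (α/(4*(m:ℝ))) * ((ε^2 / t) * (4 * (d u : ℝ))) = 2 * ε ^ 2 * π u / t := by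
      rw [hπu]
      field_simp
    calc 2 * ε ^ 2 * π u / t = (α/(4*(m:ℝ))) * ((ε^2 / t) * (4 * (d u : ℝ))) := hkey2.symm
      _ ≤ (α / (4 * m)) * ∑ i ∈ Finset.Icc 1 t, ∑ v ∈ (G i).neighborFinset u,
          (ρ (i - 1) u - ρ (i - 1) v) ^ 2 := by
          apply mul_le_mul_of_nonneg_left hS
          positivity
  constructor
  · rw [hVar 0 (Nat.zero_le t), hVar t le_rfl]
    linarith
  · exact part2
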